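/- Suppose moreover that K ≥ 1, 𝙺 ≥ 1, D̂ is the open Euclidean ball of radius Kⁿ centered at 0 in ℝ^{n−1}, and that the operator norm of L_k⁻¹ satisfies ‖L_k⁻¹‖ ≤ Kⁿ for every k ∈ ℤⁿ_{*,K}. Define Ω⁰ := {y ∈ ℝⁿ : ‖y‖ < 1 and |y·k| ≥ α/2 for every k ∈ ℤⁿ_{*,K}}, Ω¹ := ⋃_{k∈ℤⁿ_{*,K}} L_k(Z_k^♯), and Ω² := ⋃_{k∈ℤⁿ_{*,K}} L_k(Z'_k). Then the open unit ball {y ∈ ℝⁿ : ‖y‖ < 1} is contained in Ω⁰ ∪ Ω¹ ∪ Ω². -/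

import Mathlib

open scoped Matrix

/-- Nonzero integer vectors whose first nonzero component is positive. -/
def ZSharp {n : ℕ} (k : Fin n → ℤ) : Prop :=
  ∃ j, 0 < k j ∧ ∀ i, i < j → k i = 0

/-- Generators of one-dimensional maximal lattices: `ℤⁿ_*`. -/
def ZStar {n : ℕ} (k : Fin n → ℤ) : Prop :=
  ZSharp k ∧ Finset.univ.gcd k = 1

/-- The 1-norm `|k|₁ = ∑ |k_i|` of an integer vector. -/
def onormZ {n : ℕ} (k : Fin n → ℤ) : ℤ := ∑ i, |k i|

/-- Euclidean norm on `Fin n → ℝ`. -/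
noncomputable def enorm' {n : ℕ} (y : Fin n → ℝ) : ℝ := Real.sqrt (∑ i, y i ^ 2)

/-- Euclidean dot product on `Fin n → ℝ`. -/
def edot {n : ℕ} (x y : Fin n → ℝ) : ℝ := ∑ i, x i * y i

/-- Orthogonal projection onto the hyperplane orthogonal to `k`. -/
noncomputable def eproj {n : ℕ} (k y : Fin n → ℝ) : Fin n → ℝ :=
  y - ((∑ i, k i ^ 2)⁻¹ * edot y k) • k

/-- The real vector associated with an integer vector. -/
def intR {n : ℕ} (k : Fin n → ℤ) : Fin n → ℝ := fun i => (k i : ℝ)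

/-- `κ = ‖k‖²` for an integer vector `k`. -/
noncomputable def ksq {n : ℕ} (k : Fin n → ℤ) : ℝ := ∑ i, ((k i : ℝ)) ^ 2

/-- `Â_k`: the first `n−1` rows of `A_k`, as a real matrix. -/
def AhatR {m : ℕ} (A : Matrix (Fin (m + 1)) (Fin (m + 1)) ℤ) :
    Matrix (Fin m) (Fin (m + 1)) ℝ :=
  Matrix.of fun i j => (A i.castSucc j : ℝ)

/-- The map `L_k : ℝⁿ → ℝⁿ`, `L_k(Ĵ, J_n) = J_n k + π_k^⊥(Â_kᵀ Ĵ)` (identifying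
`J ∈ ℝⁿ` with `(Ĵ, J_n)`, where `Ĵ` is the vector of the first `n−1` coordinates). -/
noncomputable def LfullZ {m : ℕ} (k : Fin (m + 1) → ℤ)
    (A : Matrix (Fin (m + 1)) (Fin (m + 1)) ℤ) :
    (Fin (m + 1) → ℝ) → Fin (m + 1) → ℝ :=
  fun J => J (Fin.last m) • intR k +
    eproj (intR k) ((AhatR A)ᵀ.mulVec fun i : Fin m => J i.castSucc)

/-- The set `Ẑ_k ⊆ D̂` (with `D̂` the ball of radius `Kⁿ` in `ℝ^{n−1}`). -/
noncomputable def ZhatSet {m : ℕ} (K KK α : ℝ) (k : Fin (m + 1) → ℤ)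
    (A : Matrix (Fin (m + 1)) (Fin (m + 1)) ℤ) : Set (Fin m → ℝ) :=
  {Jh | enorm' Jh < K ^ (m + 1) ∧
    ∀ l : Fin (m + 1) → ℤ, ZStar l → (onormZ l : ℝ) ≤ KK → (¬∃ c : ℤ, l = c • k) →
      3 * α * KK * enorm' (intR l) / enorm' (intR k) ≤
        |edot (eproj (intR k) ((AhatR A)ᵀ.mulVec Jh)) (intR l)|}

/-- The set `Z_k^♯ = Ẑ_k × (−α/(2κ), α/(2κ)) ⊆ ℝⁿ`. -/
noncomputable def ZsharpSet {m : ℕ} (K KK α : ℝ) (k : Fin (m + 1) → ℤ)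
    (A : Matrix (Fin (m + 1)) (Fin (m + 1)) ℤ) : Set (Fin (m + 1) → ℝ) :=
  {J | (fun i : Fin m => J i.castSucc) ∈ ZhatSet K KK α k A ∧
    |J (Fin.last m)| < α / (2 * ksq k)}

/-- The set `Z'_k = (D̂ \ Ẑ_k) × (−α/κ, α/κ) ⊆ ℝⁿ`. -/
noncomputable def ZprimeSet {m : ℕ} (K KK α : ℝ) (k : Fin (m + 1) → ℤ)
    (A : Matrix (Fin (m + 1)) (Fin (m + 1)) ℤ) : Set (Fin (m + 1) → ℝ) :=
  {J | enorm' (fun i : Fin m => J i.castSucc) < K ^ (m + 1) ∧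
    (fun i : Fin m => J i.castSucc) ∉ ZhatSet K KK α k A ∧
    |J (Fin.last m)| < α / ksq k}

section Aux

variable {n : ℕ}

lemma edot_add_left (x y z : Fin n → ℝ) : edot (x + y) z = edot x z + edot y z := by
  simp [edot, add_mul, Finset.sum_add_distrib]

lemma edot_sub_left (x y z : Fin n → ℝ) : edot (x - y) z = edot x z - edot y z := by
  simp [edot, sub_mul, Finset.sum_sub_distrib]

lemma edot_smul_left (c : ℝ) (x z : Fin n → ℝ) : edot (c • x) z = c * edot x z := by
  simp [edot, Finset.mul_sum, mul_assoc]

lemma edot_self_eq_ksq (k : Fin n → ℤ) : edot (intR k) (intR k) = ksq k := by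
  simp [edot, ksq, intR, sq]

lemma ksq_pos {k : Fin n → ℤ} (h : ZSharp k) : 0 < ksq k := by
  obtain ⟨j, hj, -⟩ := h
  have h1 : (0 : ℝ) < ((k j : ℝ)) ^ 2 := by positivity
  refine lt_of_lt_of_le h1 ?_
  have := Finset.single_le_sum (f := fun i => ((k i : ℝ)) ^ 2)
    (fun i _ => by positivity) (Finset.mem_univ j)
  simpa [ksq] using this

lemma enorm'_nonneg (y : Fin n → ℝ) : 0 ≤ enorm' y := Real.sqrt_nonneg _

lemma enorm'_zero : enorm' (0 : Fin n → ℝ) = 0 := by simp [enorm']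

lemma eq_zero_of_enorm'_eq_zero {y : Fin n → ℝ} (h : enorm' y = 0) : y = 0 := by
  have hs : (0 : ℝ) ≤ ∑ i, y i ^ 2 := Finset.sum_nonneg fun i _ => by positivity
  have : ∑ i, y i ^ 2 = 0 := by
    have := Real.sqrt_eq_zero hs |>.mp h
    exact this
  have h2 := (Finset.sum_eq_zero_iff_of_nonneg (fun i _ => by positivity)).mp this
  funext i
  have := h2 i (Finset.mem_univ i)
  exact pow_eq_zero_iff (by norm_num) |>.mp this

lemma enorm'_cast {m : ℕ} (J : Fin (m + 1) → ℝ) :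
    enorm' (fun i : Fin m => J i.castSucc) ≤ enorm' J := by
  apply Real.sqrt_le_sqrt
  rw [Fin.sum_univ_castSucc]
  have : (0 : ℝ) ≤ J (Fin.last m) ^ 2 := by positivity
  linarith

end Aux

/-- `LfullZ` as a linear map. -/
noncomputable def Llin {m : ℕ} (k : Fin (m + 1) → ℤ)
    (A : Matrix (Fin (m + 1)) (Fin (m + 1)) ℤ) :
    (Fin (m + 1) → ℝ) →ₗ[ℝ] (Fin (m + 1) → ℝ) where
  toFun := LfullZ k A
  map_add' x y := by
    have hv : ((AhatR A)ᵀ.mulVec fun i : Fin m => x i.castSucc + y i.castSucc)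
        = ((AhatR A)ᵀ.mulVec fun i : Fin m => x i.castSucc)
          + (AhatR A)ᵀ.mulVec fun i : Fin m => y i.castSucc := by
      rw [show (fun i : Fin m => x i.castSucc + y i.castSucc)
          = (fun i : Fin m => x i.castSucc) + fun i : Fin m => y i.castSucc from rfl,
        Matrix.mulVec_add]
    simp only [LfullZ, eproj, Pi.add_apply, hv, edot_add_left]
    module
  map_smul' c x := by
    have hv : ((AhatR A)ᵀ.mulVec fun i : Fin m => c * x i.castSucc)
        = c • (AhatR A)ᵀ.mulVec fun i : Fin m => x i.castSucc := by
      rw [show (fun i : Fin m => c * x i.castSucc)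
          = c • fun i : Fin m => x i.castSucc from rfl,
        Matrix.mulVec_smul]
    simp only [LfullZ, eproj, Pi.smul_apply, hv, edot_smul_left, RingHom.id_apply,
      smul_eq_mul]
    module

lemma edot_LfullZ {m : ℕ} (k : Fin (m + 1) → ℤ) (hk : ZSharp k)
    (A : Matrix (Fin (m + 1)) (Fin (m + 1)) ℤ) (J : Fin (m + 1) → ℝ) :
    edot (LfullZ k A J) (intR k) = J (Fin.last m) * ksq k := by
  have hκ : ksq k ≠ 0 := ne_of_gt (ksq_pos hk)
  have hsum : (∑ i, intR k i ^ 2) = ksq k := by simp [intR, ksq]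
  simp only [LfullZ, eproj, edot_add_left, edot_sub_left, edot_smul_left,
    edot_self_eq_ksq, hsum]
  field_simp
  ring

theorem stmt_5 (m : ℕ) (hm : 1 ≤ m) (K KK α : ℝ) (hK : 1 ≤ K) (hKK : 1 ≤ KK)
    (hα : 0 < α)
    (A : (Fin (m + 1) → ℤ) → Matrix (Fin (m + 1)) (Fin (m + 1)) ℤ)
    (hrow : ∀ k, ZStar k → (onormZ k : ℝ) ≤ K → ∀ j, A k (Fin.last m) j = k j)
    (hdet : ∀ k, ZStar k → (onormZ k : ℝ) ≤ K → (A k).det = 1)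
    -- `‖L_k⁻¹‖ ≤ Kⁿ`
    (hinv : ∀ k, ZStar k → (onormZ k : ℝ) ≤ K →
      ∀ J : Fin (m + 1) → ℝ, enorm' J ≤ K ^ (m + 1) * enorm' (LfullZ k (A k) J)) :
    {y : Fin (m + 1) → ℝ | enorm' y < 1} ⊆
      ({y : Fin (m + 1) → ℝ | enorm' y < 1 ∧
          ∀ k : Fin (m + 1) → ℤ, ZStar k → (onormZ k : ℝ) ≤ K →
            α / 2 ≤ |edot y (intR k)|} ∪
        (⋃ k ∈ {k : Fin (m + 1) → ℤ | ZStar k ∧ (onormZ k : ℝ) ≤ K},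
          LfullZ k (A k) '' ZsharpSet K KK α k (A k)) ∪
        (⋃ k ∈ {k : Fin (m + 1) → ℤ | ZStar k ∧ (onormZ k : ℝ) ≤ K},
          LfullZ k (A k) '' ZprimeSet K KK α k (A k))) := by
  intro y hy
  simp only [Set.mem_setOf_eq] at hy
  by_cases h0 : ∀ k : Fin (m + 1) → ℤ, ZStar k → (onormZ k : ℝ) ≤ K →
      α / 2 ≤ |edot y (intR k)|
  · exact Or.inl (Or.inl ⟨hy, h0⟩)
  push_neg at h0
  obtain ⟨k, hk1, hk2, hlt⟩ := h0
  have hκ : 0 < ksq k := ksq_pos hk1.1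
  have hKpos : (0 : ℝ) < K ^ (m + 1) := by positivity
  -- L_k is injective, hence surjective
  have hinvk := hinv k hk1 hk2
  have hinj : Function.Injective (Llin k (A k)) := by
    rw [injective_iff_map_eq_zero]
    intro J hJ
    have h1 : enorm' J ≤ K ^ (m + 1) * enorm' (LfullZ k (A k) J) := hinvk J
    have h2 : LfullZ k (A k) J = 0 := hJ
    rw [h2, enorm'_zero, mul_zero] at h1
    exact eq_zero_of_enorm'_eq_zero (le_antisymm h1 (enorm'_nonneg J))
  have hsurj : Function.Surjective (Llin k (A k)) :=
    (LinearMap.injective_iff_surjective).mp hinj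
  obtain ⟨J, hJ⟩ := hsurj y
  have hJy : LfullZ k (A k) J = y := hJ
  -- last coordinate bound
  have hedot : edot y (intR k) = J (Fin.last m) * ksq k := by
    rw [← hJy, edot_LfullZ k hk1.1]
  have hJlast : |J (Fin.last m)| < α / (2 * ksq k) := by
    rw [lt_div_iff₀ (by positivity)]
    have : |J (Fin.last m)| * ksq k < α / 2 := by
      calc |J (Fin.last m)| * ksq k = |J (Fin.last m) * ksq k| := by
            rw [abs_mul, abs_of_pos hκ]
        _ = |edot y (intR k)| := by rw [hedot]
        _ < α / 2 := hlt
    nlinarith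
  -- Ĵ in the ball
  have hJc : enorm' (fun i : Fin m => J i.castSucc) < K ^ (m + 1) := by
    calc enorm' (fun i : Fin m => J i.castSucc) ≤ enorm' J := enorm'_cast J
      _ ≤ K ^ (m + 1) * enorm' y := by rw [← hJy]; exact hinvk J
      _ < K ^ (m + 1) * 1 := by exact mul_lt_mul_of_pos_left hy hKpos
      _ = K ^ (m + 1) := mul_one _
  by_cases hZ : (fun i : Fin m => J i.castSucc) ∈ ZhatSet K KK α k (A k)
  · refine Or.inl (Or.inr ?_)
    simp only [Set.mem_iUnion, Set.mem_setOf_eq]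
    exact ⟨k, ⟨hk1, hk2⟩, J, ⟨hZ, hJlast⟩, hJy⟩
  · refine Or.inr ?_
    simp only [Set.mem_iUnion, Set.mem_setOf_eq]
    refine ⟨k, ⟨hk1, hk2⟩, J, ⟨hJc, hZ, ?_⟩, hJy⟩
    refine hJlast.trans_le ?_
    exact div_le_div_of_nonneg_left hα.le hκ (by linarith)
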